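/- Let H : ℝ → ℝ be continuous and coercive, and let F : ℝ → ℝ be continuous, non-increasing and semi-coercive. Then the set A_F is a set limiter for H. Moreover, if p ∈ A_F and p⁻ ≠ p then p satisfies condition (S), and if p ∈ A_F and p⁺ ≠ p then p satisfies condition (T); in particular, if p ∈ A_F and p⁻ < p < p⁺, then F(p) = H(p). -/
import Mathlib


open Set Filter Topology

/-- `p⁻ = sup {q < p : H(q) ≥ H(p)}`. -/
noncomputable def pminus (H : ℝ → ℝ) (p : ℝ) : ℝ :=
  sSup {q : ℝ | q < p ∧ H p ≤ H q}

/-- `p⁺ = inf {q > p : H(q) ≤ H(p)}`, with `inf ∅ = +∞` (extended reals). -/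
noncomputable def pplus (H : ℝ → ℝ) (p : ℝ) : EReal :=
  sInf (Real.toEReal '' {q : ℝ | p < q ∧ H q ≤ H p})

/-- `H(p) → +∞` as `|p| → +∞`. -/
def Coercive (H : ℝ → ℝ) : Prop :=
  Tendsto H atTop atTop ∧ Tendsto H atBot atTop

/-- `F(p) → +∞` as `p → -∞`. -/
def SemiCoercive (F : ℝ → ℝ) : Prop := Tendsto F atBot atTop

/-- the open interval `(a⁻, a⁺)` (upper endpoint possibly `+∞`). -/
def ooMM (H : ℝ → ℝ) (a : ℝ) : Set ℝ :=
  {r : ℝ | pminus H a < r ∧ (r : EReal) < pplus H a}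

/-- the open interval `(p, p⁺)` (upper endpoint possibly `+∞`). -/
def ooUp (H : ℝ → ℝ) (p : ℝ) : Set ℝ :=
  {r : ℝ | p < r ∧ (r : EReal) < pplus H p}

/-- the closed interval `[a⁻, a⁺]` (upper endpoint possibly `+∞`). -/
def ccMM (H : ℝ → ℝ) (a : ℝ) : Set ℝ :=
  {r : ℝ | pminus H a ≤ r ∧ (r : EReal) ≤ pplus H a}

/-- `A` is a set limiter for `H`. -/
def IsSetLimiter (H : ℝ → ℝ) (A : Set ℝ) : Prop :=
  (∀ a ∈ A, (pminus H a : EReal) ≠ pplus H a) ∧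
  (∀ a ∈ A, ∀ b ∈ A, a < b → H b ≤ H a) ∧
  (∀ p : ℝ, pminus H p < p → ∃ a ∈ A, (Ioo (pminus H p) p ∩ ooMM H a).Nonempty) ∧
  (∀ p : ℝ, (p : EReal) < pplus H p → ∃ a ∈ A, (ooUp H p ∩ ooMM H a).Nonempty)

open Classical in
/-- The `A`-limited flux function `F_A`: equal to `H(a)` on `[a⁻, a⁺]` for `a ∈ A`,
and to `H` elsewhere. -/
noncomputable def limFlux (H : ℝ → ℝ) (A : Set ℝ) (p : ℝ) : ℝ :=
  if h : ∃ a, a ∈ A ∧ p ∈ ccMM H a then H h.choose else H p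

/-- Condition (S) in the definition of `A_F`. -/
def CondS (H F : ℝ → ℝ) (p : ℝ) : Prop :=
  pminus H p ≠ p ∧ H p ≤ F p ∧
    ∀ q : ℝ, H q ≤ F q → (ooMM H q ∩ Ioo (pminus H p) p).Nonempty → H q ≤ H p

/-- Condition (T) in the definition of `A_F`. -/
def CondT (H F : ℝ → ℝ) (p : ℝ) : Prop :=
  (p : EReal) ≠ pplus H p ∧ F p ≤ H p ∧
    ∀ q : ℝ, F q ≤ H q → (ooMM H q ∩ ooUp H p).Nonempty → H p ≤ H q

/-- The set `A_F` associated with a boundary function `F`. -/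
def limiterOf (H F : ℝ → ℝ) : Set ℝ := {p : ℝ | CondS H F p ∨ CondT H F p}
section Basics

variable {H F : ℝ → ℝ}

lemma lset_nonempty (hco2 : Tendsto H atBot atTop) (p : ℝ) :
    {q : ℝ | q < p ∧ H p ≤ H q}.Nonempty := by
  obtain ⟨b, hb⟩ := (hco2.eventually_ge_atTop (H p)).exists_forall_of_atBot
  exact ⟨min b (p - 1), lt_of_le_of_lt (min_le_right _ _) (by linarith),
    hb _ (min_le_left _ _)⟩

lemma lset_bdd (p : ℝ) : BddAbove {q : ℝ | q < p ∧ H p ≤ H q} :=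
  ⟨p, fun q hq => hq.1.le⟩

lemma pminus_le_self (hco2 : Tendsto H atBot atTop) (p : ℝ) : pminus H p ≤ p :=
  csSup_le (lset_nonempty hco2 p) (fun q hq => hq.1.le)

lemma H_lt_of_Ioo {p q : ℝ} (h1 : pminus H p < q) (h2 : q < p) : H q < H p := by
  by_contra h
  exact absurd (le_csSup (lset_bdd p) (Set.mem_setOf.2 ⟨h2, not_lt.1 h⟩)) (not_le.2 h1)

lemma coe_le_pplus (p : ℝ) : (p : EReal) ≤ pplus H p :=
  le_sInf (by rintro x ⟨q, ⟨hq1, _⟩, rfl⟩; exact_mod_cast hq1.le)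

lemma H_lt_of_up {p r : ℝ} (h1 : p < r) (h2 : (r : EReal) < pplus H p) : H p < H r := by
  by_contra h
  exact absurd (sInf_le (Set.mem_image_of_mem _ (Set.mem_setOf.2 ⟨h1, not_lt.1 h⟩)))
    (not_le.2 h2)

lemma le_pplus_of (p : ℝ) (B : EReal)
    (h : ∀ r : ℝ, p < r → H r ≤ H p → B ≤ (r : EReal)) : B ≤ pplus H p :=
  le_sInf (by rintro x ⟨q, ⟨hq1, hq2⟩, rfl⟩; exact h q hq1 hq2)

lemma exists_real_btwn {x : ℝ} {b : EReal} (h : (x : EReal) < b) :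
    ∃ r : ℝ, x < r ∧ (r : EReal) < b := by
  obtain ⟨z, hz1, hz2⟩ := exists_between h
  lift z to ℝ using ⟨(hz2.trans_le le_top).ne, ((bot_lt_iff_ne_bot.2 (by simp)).trans hz1).ne'⟩
  exact ⟨z, by exact_mod_cast hz1, hz2⟩

lemma largest_min (hH : Continuous H) {s : Set ℝ} (hs : IsCompact s) (hne : s.Nonempty) :
    ∃ a ∈ s, (∀ x ∈ s, H a ≤ H x) ∧ (∀ x ∈ s, H x ≤ H a → x ≤ a) := by
  obtain ⟨x₀, hx₀s, hx₀⟩ := hs.exists_isMinOn hne hH.continuousOn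
  set t : Set ℝ := s ∩ {x | H x ≤ H x₀} with ht
  have htc : IsClosed t := hs.isClosed.inter (isClosed_le hH continuous_const)
  have htne : t.Nonempty := ⟨x₀, hx₀s, by simp⟩
  have htbdd : BddAbove t := hs.bddAbove.mono Set.inter_subset_left
  have hmem : sSup t ∈ t := htc.csSup_mem htne htbdd
  refine ⟨sSup t, hmem.1, ?_, ?_⟩
  · intro x hx
    exact le_trans (le_antisymm hmem.2 (hx₀ hmem.1)).le (hx₀ hx)
  · intro x hx hxa
    exact le_csSup htbdd ⟨hx, hxa.trans (le_antisymm hmem.2 (hx₀ hmem.1)).le⟩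

lemma smallest_max (hH : Continuous H) {s : Set ℝ} (hs : IsCompact s) (hne : s.Nonempty) :
    ∃ a ∈ s, (∀ x ∈ s, H x ≤ H a) ∧ (∀ x ∈ s, H a ≤ H x → a ≤ x) := by
  obtain ⟨x₀, hx₀s, hx₀⟩ := hs.exists_isMaxOn hne hH.continuousOn
  set t : Set ℝ := s ∩ {x | H x₀ ≤ H x} with ht
  have htc : IsClosed t := hs.isClosed.inter (isClosed_le continuous_const hH)
  have htne : t.Nonempty := ⟨x₀, hx₀s, by simp⟩
  have htbdd : BddBelow t := hs.bddBelow.mono Set.inter_subset_left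
  have hmem : sInf t ∈ t := htc.csInf_mem htne htbdd
  refine ⟨sInf t, hmem.1, ?_, ?_⟩
  · intro x hx
    exact le_trans (hx₀ hx) hmem.2
  · intro x hx hxa
    exact csInf_le htbdd ⟨hx, le_trans hmem.2 hxa⟩

lemma exists_c0 (hco2 : Tendsto H atBot atTop) (p : ℝ) :
    ∃ c₀ < p, ∀ r ≤ c₀, H p < H r := by
  obtain ⟨b, hb⟩ := (hco2.eventually_gt_atTop (H p)).exists_forall_of_atBot
  exact ⟨min b (p - 1), lt_of_le_of_lt (min_le_right _ _) (by linarith),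
    fun r hr => hb r (hr.trans (min_le_left _ _))⟩

lemma cross_right_nonempty (hco1 : Tendsto H atTop atTop) (hFanti : Antitone F) (p : ℝ) :
    {r : ℝ | p ≤ r ∧ F r ≤ H r}.Nonempty := by
  obtain ⟨b, hb⟩ := (hco1.eventually_gt_atTop (F p)).exists_forall_of_atTop
  refine ⟨max b p, le_max_right _ _, ?_⟩
  exact (hFanti (le_max_right _ _)).trans (hb _ (le_max_left _ _)).le

end Basics
section Builders

variable {H F : ℝ → ℝ}

lemma condT_builder {a : ℝ} {B : EReal}
    (hFa : F a ≤ H a) (haB : (a : EReal) < B)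
    (hBup : ∀ r : ℝ, a < r → (r : EReal) < B → H a < H r)
    (hleft : ∀ q, q < a → F q ≤ H q → H a ≤ H q) :
    CondT H F a ∧ B ≤ pplus H a := by
  have hple : B ≤ pplus H a := le_pplus_of a B (fun r hr hHr => by
    by_contra h; push_neg at h
    exact absurd hHr (not_le.2 (hBup r hr h)))
  refine ⟨⟨(haB.trans_le hple).ne, hFa, ?_⟩, hple⟩
  rintro q hq ⟨r, hr1, hr2⟩
  by_contra hcon; push_neg at hcon
  obtain ⟨hr2a, hr2b⟩ := hr2
  have hHr : H a < H r := H_lt_of_up hr2a hr2b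
  obtain ⟨hr1a, hr1b⟩ := hr1
  have hrq : q < r := by
    rcases lt_trichotomy r q with h | h | h
    · exact absurd (H_lt_of_Ioo hr1a h) (not_lt.2 (hcon.trans hHr).le)
    · subst h; exact absurd (hcon.trans hHr) (lt_irrefl _)
    · exact h
  rcases lt_trichotomy q a with h | h | h
  · exact absurd (hleft q h hq) (not_le.2 hcon)
  · rw [h] at hcon; exact lt_irrefl _ hcon
  · have hq2 : (q : EReal) < pplus H a :=
      lt_trans (by exact_mod_cast hrq) hr2b
    exact absurd (H_lt_of_up h hq2) (not_lt.2 hcon.le)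

lemma condS_builder (hco2 : Tendsto H atBot atTop) {a β : ℝ}
    (hβ : β < a) (hFa : H a ≤ F a)
    (hdown : ∀ r, β < r → r < a → H r < H a)
    (hright : ∀ q, a < q → H q ≤ F q → H q ≤ H a) :
    CondS H F a ∧ pminus H a ≤ β := by
  have hple : pminus H a ≤ β := csSup_le (lset_nonempty hco2 a) (fun r hr => by
    by_contra h; push_neg at h
    exact absurd hr.2 (not_le.2 (hdown r h hr.1)))
  refine ⟨⟨(hple.trans_lt hβ).ne, hFa, ?_⟩, hple⟩
  rintro q hq ⟨r, hr1, hr2⟩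
  by_contra hcon; push_neg at hcon
  have hHr : H r < H a := H_lt_of_Ioo hr2.1 hr2.2
  obtain ⟨hr1a, hr1b⟩ := hr1
  have hrq : r < q := by
    rcases lt_trichotomy q r with h | h | h
    · exact absurd (H_lt_of_up h hr1b) (not_lt.2 (hHr.trans hcon).le)
    · rw [← h] at hHr; exact absurd (hHr.trans hcon) (lt_irrefl _)
    · exact h
  rcases lt_trichotomy q a with h | h | h
  · exact absurd (H_lt_of_Ioo (hr2.1.trans hrq) h) (not_lt.2 hcon.le)
  · rw [h] at hcon; exact lt_irrefl _ hcon
  · exact absurd (hright q h hq) (not_le.2 hcon)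

end Builders
section Packs

variable {H F : ℝ → ℝ}

lemma left_pack (hH : Continuous H) (hF : Continuous F) (hco2 : Tendsto H atBot atTop)
    (hFanti : Antitone F) {p : ℝ} (hp : F p ≤ H p) :
    ∃ a, a ≤ p ∧ F a ≤ H a ∧ (∀ q, q < a → F q ≤ H q → H a ≤ H q) ∧
      (∀ r, a < r → r ≤ p → H a < H r) ∧ H a ≤ H p ∧
      (F p < H p → pminus H p < p → H a < H p) := by
  by_cases hS : (Iic p ∩ {r | H r ≤ F r}).Nonempty
  · have hCl : IsClosed (Iic p ∩ {r | H r ≤ F r}) := isClosed_Iic.inter (isClosed_le hH hF)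
    have hbdd : BddAbove (Iic p ∩ {r | H r ≤ F r}) := ⟨p, fun x hx => hx.1⟩
    set c := sSup (Iic p ∩ {r | H r ≤ F r}) with hcdef
    have hc : c ∈ Iic p ∩ {r | H r ≤ F r} := hCl.csSup_mem hS hbdd
    have hcp : c ≤ p := hc.1
    have hcF : H c ≤ F c := hc.2
    have hgt : ∀ r, c < r → r ≤ p → F r < H r := fun r h1 h2 => by
      by_contra h; push_neg at h
      exact absurd (le_csSup hbdd ⟨h2, h⟩) (not_le.2 h1)
    have hFc : F c ≤ H c := by
      rcases eq_or_lt_of_le hcp with h | h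
      · rw [h]; exact hp
      · have h1 : Ioc c p ⊆ {x | F x ≤ H x} := fun x hx => (hgt x hx.1 hx.2).le
        have h2 : c ∈ closure (Ioc c p) := by
          rw [closure_Ioc h.ne]; exact ⟨le_refl _, hcp⟩
        exact closure_minimal h1 (isClosed_le hF hH) h2
    obtain ⟨a, haI, hamin, hamax⟩ := largest_min hH isCompact_Icc (nonempty_Icc.2 hcp)
    refine ⟨a, haI.2, ?_, ?_, ?_, hamin p ⟨hcp, le_refl _⟩, ?_⟩
    · rcases eq_or_lt_of_le haI.1 with h | h
      · rw [← h]; exact hFc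
      · exact (hgt a h haI.2).le
    · intro q hq hqF
      rcases lt_or_ge q c with h | h
      · exact (le_trans (le_trans (hamin c ⟨le_refl _, hcp⟩) hcF) (hFanti h.le)).trans hqF
      · exact hamin q ⟨h, hq.le.trans haI.2⟩
    · intro r h1 h2
      by_contra h; push_neg at h
      exact absurd (hamax r ⟨haI.1.trans h1.le, h2⟩ h) (not_le.2 h1)
    · intro hlt hmin
      have hcp' : c < p := by
        rcases eq_or_lt_of_le hcp with h | h
        · rw [h] at hcF; exact absurd hcF (not_le.2 hlt)
        · exact h
      have hmax : max c (pminus H p) < p := max_lt hcp' hmin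
      set x := (max c (pminus H p) + p) / 2 with hxdef
      have hx1 : max c (pminus H p) < x := by rw [hxdef]; linarith
      have hx2 : x < p := by rw [hxdef]; linarith
      exact lt_of_le_of_lt
        (hamin x ⟨(le_max_left _ _).trans hx1.le, hx2.le⟩)
        (H_lt_of_Ioo (lt_of_le_of_lt (le_max_right _ _) hx1) hx2)
  · have hS' : ∀ r ≤ p, F r < H r := fun r hr => by
      by_contra h; push_neg at h
      exact hS ⟨r, hr, h⟩
    obtain ⟨c₀, hc₀p, hc₀⟩ := exists_c0 hco2 p
    obtain ⟨a, haI, hamin, hamax⟩ := largest_min hH isCompact_Icc (nonempty_Icc.2 hc₀p.le)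
    refine ⟨a, haI.2, (hS' a haI.2).le, ?_, ?_, hamin p ⟨hc₀p.le, le_refl _⟩, ?_⟩
    · intro q hq hqF
      rcases lt_or_ge q c₀ with h | h
      · exact le_trans (hamin p ⟨hc₀p.le, le_refl _⟩) (hc₀ q h.le).le
      · exact hamin q ⟨h, hq.le.trans haI.2⟩
    · intro r h1 h2
      by_contra h; push_neg at h
      exact absurd (hamax r ⟨haI.1.trans h1.le, h2⟩ h) (not_le.2 h1)
    · intro _ hmin
      have hmax : max c₀ (pminus H p) < p := max_lt hc₀p hmin
      set x := (max c₀ (pminus H p) + p) / 2 with hxdef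
      have hx1 : max c₀ (pminus H p) < x := by rw [hxdef]; linarith
      have hx2 : x < p := by rw [hxdef]; linarith
      exact lt_of_le_of_lt
        (hamin x ⟨(le_max_left _ _).trans hx1.le, hx2.le⟩)
        (H_lt_of_Ioo (lt_of_le_of_lt (le_max_right _ _) hx1) hx2)

lemma right_pack (hH : Continuous H) (hF : Continuous F) (hco1 : Tendsto H atTop atTop)
    (hFanti : Antitone F) {p : ℝ} (hp : H p ≤ F p) :
    ∃ a, p ≤ a ∧ H a ≤ F a ∧ (∀ q, a < q → H q ≤ F q → H q ≤ H a) ∧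
      (∀ r, p ≤ r → r < a → H r < H a) ∧ H p ≤ H a ∧
      (H p < F p → (p : EReal) < pplus H p → H p < H a) := by
  have hS : (Ici p ∩ {r | F r ≤ H r}).Nonempty := by
    obtain ⟨r, hr1, hr2⟩ := cross_right_nonempty hco1 hFanti p
    exact ⟨r, hr1, hr2⟩
  have hCl : IsClosed (Ici p ∩ {r | F r ≤ H r}) := isClosed_Ici.inter (isClosed_le hF hH)
  have hbdd : BddBelow (Ici p ∩ {r | F r ≤ H r}) := ⟨p, fun x hx => hx.1⟩
  set e := sInf (Ici p ∩ {r | F r ≤ H r}) with hedef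
  have he : e ∈ Ici p ∩ {r | F r ≤ H r} := hCl.csInf_mem hS hbdd
  have hpe : p ≤ e := he.1
  have heF : F e ≤ H e := he.2
  have hgt : ∀ r, p ≤ r → r < e → H r < F r := fun r h1 h2 => by
    by_contra h; push_neg at h
    exact absurd (csInf_le hbdd ⟨h1, h⟩) (not_le.2 h2)
  have hFe : H e ≤ F e := by
    rcases eq_or_lt_of_le hpe with h | h
    · rw [← h]; exact hp
    · have h1 : Ico p e ⊆ {x | H x ≤ F x} := fun x hx => (hgt x hx.1 hx.2).le
      have h2 : e ∈ closure (Ico p e) := by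
        rw [closure_Ico h.ne]; exact ⟨hpe, le_refl _⟩
      exact closure_minimal h1 (isClosed_le hH hF) h2
  obtain ⟨a, haI, hamax, hamin⟩ := smallest_max hH isCompact_Icc (nonempty_Icc.2 hpe)
  refine ⟨a, haI.1, ?_, ?_, ?_, hamax p ⟨le_refl _, hpe⟩, ?_⟩
  · rcases eq_or_lt_of_le haI.2 with h | h
    · rw [h]; exact hFe
    · exact (hgt a haI.1 h).le
  · intro q hq hqF
    rcases le_or_gt q e with h | h
    · exact hamax q ⟨haI.1.trans hq.le, h⟩
    · exact hqF.trans ((hFanti h.le).trans (heF.trans (hamax e ⟨hpe, le_refl _⟩)))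
  · intro r h1 h2
    by_contra h; push_neg at h
    exact absurd (hamin r ⟨h1, h2.le.trans haI.2⟩ h) (not_le.2 h2)
  · intro hlt hplus
    have hpe' : p < e := by
      rcases eq_or_lt_of_le hpe with h | h
      · rw [← h] at heF; exact absurd heF (not_le.2 hlt)
      · exact h
    obtain ⟨x, hx1, hx2⟩ := exists_real_btwn (x := p) (b := min (pplus H p) (e : EReal))
      (lt_min hplus (by exact_mod_cast hpe'))
    have hx3 : (x : EReal) < pplus H p := hx2.trans_le (min_le_left _ _)
    have hx4 : x < e := by
      have := hx2.trans_le (min_le_right _ _); exact_mod_cast this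
    exact lt_of_lt_of_le (H_lt_of_up hx1 hx3) (hamax x ⟨hx1.le, hx4.le⟩)

end Packs
section KParts

variable {H F : ℝ → ℝ}

lemma lemK (hH : Continuous H) (hF : Continuous F) (hco2 : Tendsto H atBot atTop)
    (hFanti : Antitone F) {p : ℝ} (hpT : CondT H F p) (hmin : pminus H p < p) :
    H p ≤ F p := by
  by_contra h; push_neg at h
  obtain ⟨a, hap, haF, hleft, hup, haq, hstrict⟩ := left_pack hH hF hco2 hFanti h.le
  have haH : H a < H p := hstrict h hmin
  have hpp : (p : EReal) < pplus H p := lt_of_le_of_ne (coe_le_pplus p) hpT.1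
  have hplus : pplus H p ≤ pplus H a := le_pplus_of a _ (fun r hr hHr => by
    by_contra hc; push_neg at hc
    rcases le_or_gt r p with h2 | h2
    · exact absurd hHr (not_le.2 (hup r hr h2))
    · exact absurd hHr (not_le.2 (lt_of_le_of_lt haq (H_lt_of_up h2 hc))))
  obtain ⟨r, hr1, hr2⟩ := exists_real_btwn hpp
  have hmem1 : r ∈ ooMM H a :=
    ⟨lt_of_le_of_lt ((pminus_le_self hco2 a).trans hap) hr1, hr2.trans_le hplus⟩
  have := hpT.2.2 a haF ⟨r, hmem1, ⟨hr1, hr2⟩⟩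
  exact absurd this (not_le.2 haH)

lemma lemK' (hH : Continuous H) (hF : Continuous F) (hco1 : Tendsto H atTop atTop)
    (hco2 : Tendsto H atBot atTop) (hFanti : Antitone F) {p : ℝ} (hpS : CondS H F p)
    (hplus : (p : EReal) < pplus H p) : F p ≤ H p := by
  by_contra h; push_neg at h
  obtain ⟨a, hpa, haF, hright, hdown, haq, hstrict⟩ := right_pack hH hF hco1 hFanti h.le
  have haH : H p < H a := hstrict h hplus
  have hmin : pminus H p < p := lt_of_le_of_ne (pminus_le_self hco2 p) hpS.1
  have hminus : pminus H a ≤ pminus H p := csSup_le (lset_nonempty hco2 a) (fun r hr => by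
    by_contra hc; push_neg at hc
    rcases lt_or_ge r p with h2 | h2
    · exact absurd hr.2 (not_le.2 (lt_trans (H_lt_of_Ioo hc h2) haH))
    · exact absurd hr.2 (not_le.2 (hdown r h2 hr.1)))
  set r := (pminus H p + p) / 2 with hrdef
  have hr1 : pminus H p < r := by rw [hrdef]; linarith
  have hr2 : r < p := by rw [hrdef]; linarith
  have hmem1 : r ∈ ooMM H a := ⟨hminus.trans_lt hr1, by
    have : r < a := hr2.trans_le hpa
    calc (r : EReal) < (a : EReal) := by exact_mod_cast this
    _ ≤ pplus H a := coe_le_pplus a⟩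
  have := hpS.2.2 a haF ⟨r, hmem1, ⟨hr1, hr2⟩⟩
  exact absurd this (not_le.2 haH)

lemma mem_condS (hH : Continuous H) (hF : Continuous F) (hco2 : Tendsto H atBot atTop)
    (hFanti : Antitone F) {p : ℝ} (hp : p ∈ limiterOf H F) (hne : pminus H p ≠ p) :
    CondS H F p := by
  rcases hp with h | h
  · exact h
  · have hmin : pminus H p < p := lt_of_le_of_ne (pminus_le_self hco2 p) hne
    have hK : H p ≤ F p := lemK hH hF hco2 hFanti h hmin
    have hFp : F p = H p := le_antisymm h.2.1 hK
    refine ⟨hne, hK, ?_⟩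
    rintro q hq ⟨r, hr1, hr2⟩
    by_contra hc; push_neg at hc
    have hHr : H r < H p := H_lt_of_Ioo hr2.1 hr2.2
    have hrq : r < q := by
      rcases lt_trichotomy q r with h' | h' | h'
      · exact absurd (H_lt_of_up h' hr1.2) (not_lt.2 (hHr.trans hc).le)
      · rw [h'] at hc; exact absurd hHr (not_lt.2 hc.le)
      · exact h'
    rcases lt_trichotomy q p with h' | h' | h'
    · exact absurd (H_lt_of_Ioo (hr2.1.trans hrq) h') (not_lt.2 hc.le)
    · rw [h'] at hc; exact lt_irrefl _ hc
    · have h1 : F q ≤ F p := hFanti h'.le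
      rw [hFp] at h1
      exact absurd (lt_of_lt_of_le hc (hq.trans h1)) (lt_irrefl _)

lemma mem_condT (hH : Continuous H) (hF : Continuous F) (hco1 : Tendsto H atTop atTop)
    (hco2 : Tendsto H atBot atTop) (hFanti : Antitone F) {p : ℝ} (hp : p ∈ limiterOf H F)
    (hne : (p : EReal) ≠ pplus H p) : CondT H F p := by
  rcases hp with h | h
  · have hplus : (p : EReal) < pplus H p := lt_of_le_of_ne (coe_le_pplus p) hne
    have hK : F p ≤ H p := lemK' hH hF hco1 hco2 hFanti h hplus
    have hFp : F p = H p := le_antisymm hK h.2.1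
    refine ⟨hne, hK, ?_⟩
    rintro q hq ⟨r, hr1, hr2⟩
    by_contra hc; push_neg at hc
    have hHr : H p < H r := H_lt_of_up hr2.1 hr2.2
    have hqr : q < r := by
      rcases lt_trichotomy r q with h' | h' | h'
      · exact absurd (H_lt_of_Ioo hr1.1 h') (not_lt.2 (hc.trans hHr).le)
      · rw [← h'] at hc; exact absurd hHr (not_lt.2 hc.le)
      · exact h'
    rcases lt_trichotomy p q with h' | h' | h'
    · have hq2 : (q : EReal) < pplus H p := lt_trans (by exact_mod_cast hqr) hr2.2
      exact absurd (H_lt_of_up h' hq2) (not_lt.2 hc.le)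
    · rw [← h'] at hc; exact lt_irrefl _ hc
    · have h1 : F p ≤ F q := hFanti h'.le
      rw [hFp] at h1
      exact absurd (lt_of_le_of_lt (h1.trans hq) hc) (lt_irrefl _)
  · exact h

end KParts
section Exists

variable {H F : ℝ → ℝ}

lemma exist_up (hH : Continuous H) (hF : Continuous F) (hco1 : Tendsto H atTop atTop)
    (hco2 : Tendsto H atBot atTop) (hFanti : Antitone F) (p : ℝ)
    (hplus : (p : EReal) < pplus H p) :
    ∃ a ∈ limiterOf H F, (ooUp H p ∩ ooMM H a).Nonempty := by
  rcases le_or_gt (F p) (H p) with hcase | hcase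
  · obtain ⟨a, hap, haF, hleft, hup, haq, _⟩ := left_pack hH hF hco2 hFanti hcase
    have hBup : ∀ r : ℝ, a < r → (r : EReal) < pplus H p → H a < H r := fun r h1 h2 => by
      rcases le_or_gt r p with h3 | h3
      · exact hup r h1 h3
      · exact lt_of_le_of_lt haq (H_lt_of_up h3 h2)
    have haB : (a : EReal) < pplus H p := lt_of_le_of_lt (by exact_mod_cast hap) hplus
    obtain ⟨hT, hple⟩ := condT_builder haF haB hBup hleft
    obtain ⟨r, hr1, hr2⟩ := exists_real_btwn hplus
    exact ⟨a, Or.inr hT, r, ⟨hr1, hr2⟩,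
      ⟨lt_of_le_of_lt ((pminus_le_self hco2 a).trans hap) hr1, hr2.trans_le hple⟩⟩
  · obtain ⟨a, hpa, haF, hright, hdown, _, hstrict⟩ := right_pack hH hF hco1 hFanti hcase.le
    have haH : H p < H a := hstrict hcase hplus
    have hpa' : p < a := by
      rcases eq_or_lt_of_le hpa with h | h
      · rw [← h] at haH; exact absurd haH (lt_irrefl _)
      · exact h
    obtain ⟨hS, hple⟩ := condS_builder hco2 (β := p) hpa' haF
      (fun r h1 h2 => hdown r h1.le h2) hright
    obtain ⟨x, hx1, hx2⟩ := exists_real_btwn (x := p) (b := min (pplus H p) (a : EReal))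
      (lt_min hplus (by exact_mod_cast hpa'))
    have hx3 : (x : EReal) < pplus H p := hx2.trans_le (min_le_left _ _)
    have hx4 : x < a := by
      have := hx2.trans_le (min_le_right _ _); exact_mod_cast this
    exact ⟨a, Or.inl hS, x, ⟨hx1, hx3⟩,
      ⟨hple.trans_lt hx1, lt_of_lt_of_le (by exact_mod_cast hx4) (coe_le_pplus a)⟩⟩

lemma exist_down (hH : Continuous H) (hF : Continuous F) (hco1 : Tendsto H atTop atTop)
    (hco2 : Tendsto H atBot atTop) (hFanti : Antitone F) (p : ℝ)
    (hmin : pminus H p < p) :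
    ∃ a ∈ limiterOf H F, (Ioo (pminus H p) p ∩ ooMM H a).Nonempty := by
  rcases le_or_gt (H p) (F p) with hcase | hcase
  · obtain ⟨a, hpa, haF, hright, hdown, haq, _⟩ := right_pack hH hF hco1 hFanti hcase
    have hβ : pminus H p < a := hmin.trans_le hpa
    have hdown' : ∀ r, pminus H p < r → r < a → H r < H a := fun r h1 h2 => by
      rcases lt_or_ge r p with h3 | h3
      · exact lt_of_lt_of_le (H_lt_of_Ioo h1 h3) haq
      · exact hdown r h3 h2
    obtain ⟨hS, hple⟩ := condS_builder hco2 hβ haF hdown' hright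
    set r := (pminus H p + p) / 2 with hrdef
    have hr1 : pminus H p < r := by rw [hrdef]; linarith
    have hr2 : r < p := by rw [hrdef]; linarith
    exact ⟨a, Or.inl hS, r, ⟨hr1, hr2⟩, ⟨hple.trans_lt hr1,
      lt_of_lt_of_le (by exact_mod_cast hr2.trans_le hpa) (coe_le_pplus a)⟩⟩
  · obtain ⟨a, hap, haF, hleft, hup, _, hstrict⟩ := left_pack hH hF hco2 hFanti hcase.le
    have haH : H a < H p := hstrict hcase hmin
    have hap' : a < p := by
      rcases eq_or_lt_of_le hap with h | h
      · rw [h] at haH; exact absurd haH (lt_irrefl _)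
      · exact h
    have hBup : ∀ r : ℝ, a < r → (r : EReal) < (p : EReal) → H a < H r := fun r h1 h2 =>
      hup r h1 (by exact_mod_cast h2.le)
    obtain ⟨hT, hple⟩ := condT_builder haF (B := (p : EReal)) (by exact_mod_cast hap') hBup hleft
    set r := (max a (pminus H p) + p) / 2 with hrdef
    have hmax : max a (pminus H p) < p := max_lt hap' hmin
    have hr1 : max a (pminus H p) < r := by rw [hrdef]; linarith
    have hr2 : r < p := by rw [hrdef]; linarith
    exact ⟨a, Or.inr hT, r, ⟨lt_of_le_of_lt (le_max_right _ _) hr1, hr2⟩,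
      ⟨lt_of_le_of_lt ((pminus_le_self hco2 a).trans (le_max_left _ _)) hr1,
        lt_of_lt_of_le (by exact_mod_cast hr2) hple⟩⟩

end Exists
section Mono

variable {H F : ℝ → ℝ}

lemma aux_right (hH : Continuous H) (hF : Continuous F) (hco2 : Tendsto H atBot atTop)
    (hFanti : Antitone F) {b x : ℝ} (hbT : CondT H F b) (hxb : x ≤ b)
    (hx : F x ≤ H x) (hxH : H x < H b) : False := by
  have hT₀c : IsCompact (Icc x b ∩ {r | F r ≤ H r}) :=
    isCompact_Icc.inter_right (isClosed_le hF hH)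
  have hT₀ne : (Icc x b ∩ {r | F r ≤ H r}).Nonempty := ⟨x, ⟨le_refl _, hxb⟩, hx⟩
  obtain ⟨q, hqT, hqmin, hqmax⟩ := largest_min hH hT₀c hT₀ne
  have hqb : H q < H b := lt_of_le_of_lt (hqmin x ⟨⟨le_refl _, hxb⟩, hx⟩) hxH
  have hbB : (b : EReal) < pplus H b := lt_of_le_of_ne (coe_le_pplus b) hbT.1
  have claim : ∀ r, q < r → r ≤ b → H q < H r := by
    intro r h1 h2
    by_contra hcon; push_neg at hcon
    rcases le_or_gt (F r) (H r) with hFr | hFr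
    · exact absurd h1 (not_lt.2 (hqmax r ⟨⟨hqT.1.1.trans h1.le, h2⟩, hFr⟩ hcon))
    · have hUc : IsClosed (Icc r b ∩ {y | F y ≤ H y}) :=
        isClosed_Icc.inter (isClosed_le hF hH)
      have hUne : (Icc r b ∩ {y | F y ≤ H y}).Nonempty := ⟨b, ⟨h2, le_refl _⟩, hbT.2.1⟩
      have hUbdd : BddBelow (Icc r b ∩ {y | F y ≤ H y}) := ⟨r, fun y hy => hy.1.1⟩
      have hu := hUc.csInf_mem hUne hUbdd
      set u := sInf (Icc r b ∩ {y | F y ≤ H y}) with hudef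
      have hur : r ≤ u := hu.1.1
      have hur' : r < u := by
        rcases eq_or_lt_of_le hur with h | h
        · rw [← h] at hu; exact absurd hu.2 (not_le.2 hFr)
        · exact h
      have hgt : ∀ y, r ≤ y → y < u → H y < F y := fun y hy1 hy2 => by
        by_contra hcy; push_neg at hcy
        exact absurd (csInf_le hUbdd ⟨⟨hy1, hy2.le.trans hu.1.2⟩, hcy⟩) (not_le.2 hy2)
      have hFu : H u ≤ F u := by
        have h1' : Ico r u ⊆ {y | H y ≤ F y} := fun y hy => (hgt y hy.1 hy.2).le
        have h2' : u ∈ closure (Ico r u) := by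
          rw [closure_Ico hur'.ne]; exact ⟨hur, le_refl _⟩
        exact closure_minimal h1' (isClosed_le hH hF) h2'
      have hHuq : H u ≤ H q := le_trans hFu (le_trans (hFanti (h1.le.trans hur)) hqT.2)
      have huq : u ≤ q := hqmax u ⟨⟨hqT.1.1.trans (h1.le.trans hur), hu.1.2⟩, hu.2⟩ hHuq
      exact absurd (h1.trans_le hur) (not_lt.2 huq)
  have hplus : pplus H b ≤ pplus H q := le_pplus_of q _ (fun r hr hHr => by
    by_contra hcr; push_neg at hcr
    rcases le_or_gt r b with h2 | h2
    · exact absurd hHr (not_le.2 (claim r hr h2))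
    · exact absurd hHr (not_le.2 (hqb.trans (H_lt_of_up h2 hcr))))
  obtain ⟨r, hr1, hr2⟩ := exists_real_btwn hbB
  have := hbT.2.2 q hqT.2 ⟨r,
    ⟨lt_of_le_of_lt ((pminus_le_self hco2 q).trans hqT.1.2) hr1, hr2.trans_le hplus⟩,
    ⟨hr1, hr2⟩⟩
  exact absurd this (not_le.2 hqb)

lemma aux_left (hH : Continuous H) (hF : Continuous F) (hco2 : Tendsto H atBot atTop)
    (hFanti : Antitone F) {a x : ℝ} (haS : CondS H F a) (hax : a ≤ x)
    (hx : H x ≤ F x) (hxH : H a < H x) : False := by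
  have hT₁c : IsCompact (Icc a x ∩ {r | H r ≤ F r}) :=
    isCompact_Icc.inter_right (isClosed_le hH hF)
  have hT₁ne : (Icc a x ∩ {r | H r ≤ F r}).Nonempty := ⟨x, ⟨hax, le_refl _⟩, hx⟩
  obtain ⟨q, hqT, hqmax, hqmin⟩ := smallest_max hH hT₁c hT₁ne
  have hqa : H a < H q := lt_of_lt_of_le hxH (hqmax x ⟨⟨hax, le_refl _⟩, hx⟩)
  have haB : pminus H a < a := lt_of_le_of_ne (pminus_le_self hco2 a) haS.1
  have claim : ∀ r, a ≤ r → r < q → H r < H q := by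
    intro r h1 h2
    by_contra hcon; push_neg at hcon
    rcases le_or_gt (H r) (F r) with hFr | hFr
    · exact absurd h2 (not_lt.2 (hqmin r ⟨⟨h1, h2.le.trans hqT.1.2⟩, hFr⟩ hcon))
    · have hUc : IsClosed (Icc a r ∩ {y | H y ≤ F y}) :=
        isClosed_Icc.inter (isClosed_le hH hF)
      have hUne : (Icc a r ∩ {y | H y ≤ F y}).Nonempty := ⟨a, ⟨le_refl _, h1⟩, haS.2.1⟩
      have hUbdd : BddAbove (Icc a r ∩ {y | H y ≤ F y}) := ⟨r, fun y hy => hy.1.2⟩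
      have hu := hUc.csSup_mem hUne hUbdd
      set u := sSup (Icc a r ∩ {y | H y ≤ F y}) with hudef
      have hur : u ≤ r := hu.1.2
      have hur' : u < r := by
        rcases eq_or_lt_of_le hur with h | h
        · rw [h] at hu; exact absurd hu.2 (not_le.2 hFr)
        · exact h
      have hgt : ∀ y, u < y → y ≤ r → F y < H y := fun y hy1 hy2 => by
        by_contra hcy; push_neg at hcy
        exact absurd (le_csSup hUbdd ⟨⟨hu.1.1.trans hy1.le, hy2⟩, hcy⟩) (not_le.2 hy1)
      have hFu : F u ≤ H u := by
        have h1' : Ioc u r ⊆ {y | F y ≤ H y} := fun y hy => (hgt y hy.1 hy.2).le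
        have h2' : u ∈ closure (Ioc u r) := by
          rw [closure_Ioc hur'.ne]; exact ⟨le_refl _, hur⟩
        exact closure_minimal h1' (isClosed_le hF hH) h2'
      have hHuq : H q ≤ H u :=
        le_trans hqT.2 (le_trans (hFanti (hur.trans h2.le)) hFu)
      have huq : q ≤ u := hqmin u ⟨⟨hu.1.1, hur.trans (h2.le.trans hqT.1.2)⟩, hu.2⟩ hHuq
      exact absurd (hur'.trans h2) (not_lt.2 huq)
  have hminus : pminus H q ≤ pminus H a := csSup_le (lset_nonempty hco2 q) (fun r hr => by
    by_contra hcr; push_neg at hcr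
    rcases le_or_gt a r with h2 | h2
    · exact absurd hr.2 (not_le.2 (claim r h2 hr.1))
    · exact absurd hr.2 (not_le.2 (lt_trans (H_lt_of_Ioo hcr h2) hqa)))
  set r := (pminus H a + a) / 2 with hrdef
  have hr1 : pminus H a < r := by rw [hrdef]; linarith
  have hr2 : r < a := by rw [hrdef]; linarith
  have := haS.2.2 q hqT.2 ⟨r,
    ⟨hminus.trans_lt hr1, lt_of_lt_of_le (by exact_mod_cast hr2.trans_le hqT.1.1)
      (coe_le_pplus q)⟩, ⟨hr1, hr2⟩⟩
  exact absurd this (not_le.2 hqa)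

lemma mono_limiter (hH : Continuous H) (hF : Continuous F) (hco2 : Tendsto H atBot atTop)
    (hFanti : Antitone F) {a b : ℝ} (ha : a ∈ limiterOf H F) (hb : b ∈ limiterOf H F)
    (hab : a < b) : H b ≤ H a := by
  by_contra hc; push_neg at hc
  rcases ha with haS | haT
  · rcases hb with hbS | hbT
    · exact aux_left hH hF hco2 hFanti haS hab.le hbS.2.1 hc
    · by_cases h1 : ∃ y, y ∈ Icc a b ∧ F y ≤ H y ∧ H y < H b
      · obtain ⟨y, hy1, hy2, hy3⟩ := h1
        exact aux_right hH hF hco2 hFanti hbT hy1.2 hy2 hy3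
      · push_neg at h1
        by_cases h2 : ∃ y, y ∈ Icc a b ∧ H y ≤ F y ∧ H a < H y
        · obtain ⟨y, hy1, hy2, hy3⟩ := h2
          exact aux_left hH hF hco2 hFanti haS hy1.1 hy2 hy3
        · push_neg at h2
          have key := intermediate_value_Icc hab.le (hH.sub hF).continuousOn
          have h0 : (0 : ℝ) ∈ Icc (H a - F a) (H b - F b) :=
            ⟨by linarith [haS.2.1], by linarith [hbT.2.1]⟩
          obtain ⟨y, hy, hy0⟩ := key h0
          have hyF : H y = F y := by
            have := sub_eq_zero.1 hy0; exact this
          have hb' : H b ≤ H y := h1 y hy hyF.ge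
          have ha' : H y ≤ H a := h2 y hy hyF.le
          linarith
  · rcases hb with hbS | hbT
    · have h1 : F b ≤ F a := hFanti hab.le
      have := haT.2.1
      have := hbS.2.1
      linarith
    · exact aux_right hH hF hco2 hFanti hbT hab.le haT.2.1 hc

end Mono
theorem stmt5 (H F : ℝ → ℝ) (hH : Continuous H) (hcoer : Coercive H)
    (hF : Continuous F) (hFanti : Antitone F) (hFsc : SemiCoercive F) :
    IsSetLimiter H (limiterOf H F) ∧
    (∀ p ∈ limiterOf H F, pminus H p ≠ p → CondS H F p) ∧
    (∀ p ∈ limiterOf H F, (p : EReal) ≠ pplus H p → CondT H F p) ∧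
    (∀ p ∈ limiterOf H F, pminus H p < p → (p : EReal) < pplus H p → F p = H p) := by
  obtain ⟨hco1, hco2⟩ := hcoer
  refine ⟨⟨?_, ?_, ?_, ?_⟩, ?_, ?_, ?_⟩
  · intro a ha
    rcases ha with h | h
    · have h1 : pminus H a < a := lt_of_le_of_ne (pminus_le_self hco2 a) h.1
      exact ne_of_lt (lt_of_lt_of_le (by exact_mod_cast h1) (coe_le_pplus a))
    · have h1 : (a : EReal) < pplus H a := lt_of_le_of_ne (coe_le_pplus a) h.1
      exact ne_of_lt (lt_of_le_of_lt (by exact_mod_cast pminus_le_self hco2 a) h1)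
  · intro a ha b hb hab
    exact mono_limiter hH hF hco2 hFanti ha hb hab
  · intro p hp
    exact exist_down hH hF hco1 hco2 hFanti p hp
  · intro p hp
    exact exist_up hH hF hco1 hco2 hFanti p hp
  · intro p hp hne
    exact mem_condS hH hF hco2 hFanti hp hne
  · intro p hp hne
    exact mem_condT hH hF hco1 hco2 hFanti hp hne
  · intro p hp h1 h2
    have hS := mem_condS hH hF hco2 hFanti hp h1.ne
    have hT := mem_condT hH hF hco1 hco2 hFanti hp h2.ne
    exact le_antisymm hT.2.1 hS.2.1
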